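/- Let μ ∈ ℝ^d be nonzero and let g_i = μ + ξ_i with ‖ξ_i‖ ≤ σ < ‖μ‖ for i = 1,…,n. For any nonnegative weights π_i with w = Σ_i π_i > 0, the weighted sum g = Σ_i π_i g_i satisfies cos∠(g, μ) ≥ (‖μ‖ − σ)/(‖μ‖ + σ), i.e., ⟨g, μ⟩ · (‖μ‖ + σ) ≥ ‖g‖ · ‖μ‖ · (‖μ‖ − σ). -/

import Mathlib

open Finset

theorem routing_cone_alignment {d n : ℕ}
    (μ : EuclideanSpace ℝ (Fin d)) (hμ : μ ≠ 0)
    (ξ : Fin n → EuclideanSpace ℝ (Fin d)) (σ : ℝ)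
    (hξ : ∀ i, ‖ξ i‖ ≤ σ) (hσ : σ < ‖μ‖)
    (π : Fin n → ℝ) (hπ : ∀ i, 0 ≤ π i) (hw : 0 < ∑ i, π i) :
    (inner ℝ (∑ i, π i • (μ + ξ i)) μ : ℝ) * (‖μ‖ + σ) ≥
      ‖∑ i, π i • (μ + ξ i)‖ * ‖μ‖ * (‖μ‖ - σ) := by
  rcases Nat.eq_zero_or_pos n with hn | hn
  · subst hn; simp at hw
  · have hσ0 : 0 ≤ σ := le_trans (norm_nonneg _) (hξ ⟨0, hn⟩)
    set w : ℝ := ∑ i, π i with hwdef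
    have hμ0 : 0 < ‖μ‖ := norm_pos_iff.mpr hμ
    -- inner bound
    have hinner : (inner ℝ (∑ i, π i • (μ + ξ i)) μ : ℝ) ≥ w * ‖μ‖ * (‖μ‖ - σ) := by
      rw [sum_inner]
      have : ∀ i ∈ Finset.univ, (inner ℝ (π i • (μ + ξ i)) μ : ℝ) ≥ π i * ‖μ‖ * (‖μ‖ - σ) := by
        intro i _
        rw [real_inner_smul_left, inner_add_left, real_inner_self_eq_norm_sq]
        have h1 : (inner ℝ (ξ i) μ : ℝ) ≥ -(σ * ‖μ‖) := by
          have := abs_real_inner_le_norm (ξ i) μ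
          have h2 : |(inner ℝ (ξ i) μ : ℝ)| ≤ σ * ‖μ‖ :=
            this.trans (mul_le_mul_of_nonneg_right (hξ i) (norm_nonneg _))
          linarith [neg_abs_le (inner ℝ (ξ i) μ : ℝ)]
        have hp := hπ i
        nlinarith [sq_nonneg ‖μ‖]
      calc ∑ i, (inner ℝ (π i • (μ + ξ i)) μ : ℝ) ≥ ∑ i, π i * ‖μ‖ * (‖μ‖ - σ) :=
            Finset.sum_le_sum this
        _ = w * ‖μ‖ * (‖μ‖ - σ) := by rw [← Finset.sum_mul, ← Finset.sum_mul]
    -- norm bound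
    have hnorm : ‖∑ i, π i • (μ + ξ i)‖ ≤ w * (‖μ‖ + σ) := by
      calc ‖∑ i, π i • (μ + ξ i)‖ ≤ ∑ i, ‖π i • (μ + ξ i)‖ := norm_sum_le _ _
        _ ≤ ∑ i, π i * (‖μ‖ + σ) := by
            apply Finset.sum_le_sum
            intro i _
            rw [norm_smul, Real.norm_eq_abs, abs_of_nonneg (hπ i)]
            exact mul_le_mul_of_nonneg_left
              ((norm_add_le _ _).trans (by linarith [hξ i])) (hπ i)
        _ = w * (‖μ‖ + σ) := by rw [← Finset.sum_mul]
    have hms : 0 ≤ ‖μ‖ - σ := by linarith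
    have hps : 0 < ‖μ‖ + σ := by linarith
    calc ‖∑ i, π i • (μ + ξ i)‖ * ‖μ‖ * (‖μ‖ - σ)
        ≤ (w * (‖μ‖ + σ)) * ‖μ‖ * (‖μ‖ - σ) := by
          apply mul_le_mul_of_nonneg_right _ hms
          exact mul_le_mul_of_nonneg_right hnorm hμ0.le
      _ = (w * ‖μ‖ * (‖μ‖ - σ)) * (‖μ‖ + σ) := by ring
      _ ≤ (inner ℝ (∑ i, π i • (μ + ξ i)) μ : ℝ) * (‖μ‖ + σ) :=
          mul_le_mul_of_nonneg_right hinner hps.le
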